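/- The series ∑_{n∈ℤ} |sinc(z−n)|² converges uniformly on compact subsets of the complex plane. -/

import Mathlib

open Real Complex Filter

noncomputable def csinc (w : ℂ) : ℂ :=
  if w = 0 then 1 else Complex.sin (π * w) / (π * w)

lemma csinc_continuous : Continuous csinc := by
  rw [continuous_iff_continuousAt]
  intro w
  rcases eq_or_ne w 0 with rfl | hw
  · -- continuity at 0
    have hd : HasDerivAt (fun z : ℂ => Complex.sin (π * z)) π 0 := by
      have := (Complex.hasDerivAt_sin ((π : ℂ) * 0)).comp 0
        ((hasDerivAt_id (0:ℂ)).const_mul (π : ℂ))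
      simpa [Function.comp_def] using this
    have hs := hasDerivAt_iff_tendsto_slope.mp hd
    have hs' : Tendsto (fun z : ℂ => Complex.sin (π * z) / z) (nhdsWithin 0 {(0:ℂ)}ᶜ)
        (nhds (π : ℂ)) := by
      refine hs.congr' ?_
      filter_upwards [self_mem_nhdsWithin] with z hz
      simp [slope_def_field, div_eq_inv_mul]
    have hπ : (π : ℂ) ≠ 0 := Complex.ofReal_ne_zero.mpr Real.pi_ne_zero
    have h2 : Tendsto csinc (nhdsWithin 0 {(0:ℂ)}ᶜ) (nhds 1) := by
      have := hs'.div_const (π : ℂ)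
      rw [div_self hπ] at this
      refine this.congr' ?_
      filter_upwards [self_mem_nhdsWithin] with z hz
      have hz' : z ≠ 0 := hz
      rw [csinc, if_neg hz']
      rw [div_div]
      ring_nf
    have : Tendsto csinc (nhds (0:ℂ)) (nhds 1) := by
      rw [← nhdsNE_sup_pure 0]
      refine Tendsto.sup h2 ?_
      have := tendsto_pure_nhds csinc 0
      simpa [csinc] using this
    simpa [ContinuousAt, csinc] using this
  · have : ContinuousAt (fun z : ℂ => Complex.sin (π * z) / (π * z)) w := by
      apply ContinuousAt.div
      · fun_prop
      · fun_prop
      · simp [hw, Complex.ofReal_ne_zero.mpr Real.pi_ne_zero]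
    refine this.congr ?_
    filter_upwards [isOpen_compl_singleton.mem_nhds hw] with z hz
    have hz' : z ≠ 0 := hz
    rw [csinc, if_neg hz']

lemma norm_sin_le_exp (u : ℂ) : ‖Complex.sin u‖ ≤ Real.exp |u.im| := by
  rw [Complex.sin]
  have h1 : ‖Complex.exp (-u * Complex.I)‖ = Real.exp u.im := by
    rw [Complex.norm_exp]; congr 1; simp
  have h2 : ‖Complex.exp (u * Complex.I)‖ = Real.exp (-u.im) := by
    rw [Complex.norm_exp]; congr 1; simp
  calc ‖(Complex.exp (-u * Complex.I) - Complex.exp (u * Complex.I)) * Complex.I / 2‖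
      = ‖Complex.exp (-u * Complex.I) - Complex.exp (u * Complex.I)‖ / 2 := by
        simp [norm_div, norm_mul]
    _ ≤ (Real.exp u.im + Real.exp (-u.im)) / 2 := by
        rw [← h1, ← h2]; gcongr; exact norm_sub_le _ _
    _ ≤ Real.exp |u.im| := by
        have e1 := Real.exp_le_exp.mpr (le_abs_self u.im)
        have e2 := Real.exp_le_exp.mpr (neg_le_abs u.im)
        linarith

/-- The series `∑_{n∈ℤ} |sinc(z−n)|²` converges uniformly on compact subsets of `ℂ`. -/
theorem sum_abs_csinc_sq_tendstoUniformlyOn (K : Set ℂ) (hK : IsCompact K) :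
    TendstoUniformlyOn
      (fun (s : Finset ℤ) (z : ℂ) => ∑ n ∈ s, ‖csinc (z - n)‖ ^ 2)
      (fun z => ∑' n : ℤ, ‖csinc (z - n)‖ ^ 2)
      atTop K := by
  obtain ⟨R₀, hR₀⟩ := hK.isBounded.subset_closedBall 0
  set R : ℝ := max R₀ 0 with hRdef
  have hR : K ⊆ Metric.closedBall 0 R :=
    hR₀.trans (Metric.closedBall_subset_closedBall (le_max_left _ _))
  have hR0 : 0 ≤ R := le_max_right _ _
  obtain ⟨C, hC⟩ := (isCompact_closedBall (0:ℂ) (2*R+2)).exists_bound_of_continuousOn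
    csinc_continuous.continuousOn
  have hC0 : 0 ≤ C := le_trans (norm_nonneg _) (hC 0 (by simp; positivity))
  set D : ℝ := max (C^2) (Real.exp (π * R)^2) with hD
  set u : ℤ → ℝ := fun n => D / (max 1 (|(n:ℝ)| - R - 1))^2 with hu
  have hD0 : 0 ≤ D := le_trans (sq_nonneg C) (le_max_left _ _)
  -- summability of u
  have hfN : Summable (fun k : ℕ => D / (max 1 ((k:ℝ) - R - 1))^2) := by
    rw [← summable_nat_add_iff (⌈R⌉₊ + 2)]
    have hbase : Summable (fun k : ℕ => D * (1/((k:ℝ)+1)^2)) := by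
      apply Summable.mul_left
      have h0 : Summable (fun n : ℕ => 1/((n:ℝ))^2) :=
        Real.summable_one_div_nat_pow.mpr (by norm_num)
      have := (summable_nat_add_iff 1).mpr h0
      refine this.congr fun n => ?_
      push_cast
      ring
    refine Summable.of_nonneg_of_le (fun k => by positivity) (fun k => ?_) hbase
    have hceil : R ≤ (⌈R⌉₊ : ℝ) := Nat.le_ceil R
    have hk1 : (k:ℝ) + 1 ≤ max 1 (((k + (⌈R⌉₊ + 2) : ℕ) :ℝ) - R - 1) := by
      refine le_max_of_le_right ?_
      push_cast
      linarith
    have hk0 : (0:ℝ) < (k:ℝ) + 1 := by positivity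
    rw [mul_one_div]
    gcongr
  have husum : Summable u := by
    apply Summable.of_nat_of_neg_add_one
    · refine hfN.congr fun k => ?_
      rw [hu]
      norm_num
    · have := (summable_nat_add_iff 1).mpr hfN
      refine this.congr fun k => ?_
      rw [hu]
      push_cast
      rw [_root_.abs_neg, _root_.abs_of_nonneg (by positivity : (0:ℝ) ≤ (k:ℝ)+1)]
  refine tendstoUniformlyOn_tsum husum ?_
  intro n z hz
  have hzR : ‖z‖ ≤ R := by simpa using hR hz
  have hnorm : ‖(n:ℂ)‖ = |(n:ℝ)| := by simp
  rw [Real.norm_eq_abs, _root_.abs_of_nonneg (by positivity)]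
  rcases le_or_gt (|(n:ℝ)|) (R + 2) with hn | hn
  · -- small n: use the sup bound
    have h1 : max 1 (|(n:ℝ)| - R - 1) = 1 := max_eq_left (by linarith)
    have h2 : ‖csinc (z - n)‖ ≤ C := by
      apply hC
      simp only [Metric.mem_closedBall, dist_zero_right]
      calc ‖z - (n:ℂ)‖ ≤ ‖z‖ + ‖(n:ℂ)‖ := norm_sub_le _ _
        _ ≤ R + (R + 2) := by rw [hnorm]; exact add_le_add hzR hn
        _ = 2*R + 2 := by ring
    rw [hu]
    simp only [h1, one_pow, div_one]
    exact le_trans (pow_le_pow_left₀ (norm_nonneg _) h2 2) (le_max_left _ _)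
  · -- large n
    have hw : ‖z - (n:ℂ)‖ ≥ |(n:ℝ)| - R := by
      have := norm_sub_norm_le ((n:ℂ)) z
      rw [hnorm] at this
      have h' : ‖(n:ℂ) - z‖ = ‖z - (n:ℂ)‖ := norm_sub_rev _ _
      rw [h'] at this
      linarith
    have hwpos : (0:ℝ) < ‖z - (n:ℂ)‖ := by linarith
    have hwne : z - (n:ℂ) ≠ 0 := by
      intro h; rw [h] at hwpos; simp at hwpos
    have him : |((π:ℂ) * (z - (n:ℂ))).im| ≤ π * R := by
      have : ((π:ℂ) * (z - (n:ℂ))).im = π * z.im := by simp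
      rw [this, abs_mul, abs_of_pos Real.pi_pos]
      have : |z.im| ≤ ‖z‖ := Complex.abs_im_le_norm z
      have hπ := Real.pi_pos
      nlinarith
    have hsin : ‖Complex.sin ((π:ℂ) * (z - (n:ℂ)))‖ ≤ Real.exp (π * R) :=
      le_trans (norm_sin_le_exp _) (Real.exp_le_exp.mpr him)
    have hπpos := Real.pi_pos
    have hcs : ‖csinc (z - n)‖ ≤ Real.exp (π * R) / (|(n:ℝ)| - R - 1) := by
      rw [csinc, if_neg hwne]
      rw [norm_div]
      have hden : ‖(π:ℂ) * (z - (n:ℂ))‖ = π * ‖z - (n:ℂ)‖ := by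
        rw [norm_mul]
        congr 1
        rw [Complex.norm_real, Real.norm_eq_abs, abs_of_pos Real.pi_pos]
      rw [hden]
      have hd1 : |(n:ℝ)| - R - 1 ≤ π * ‖z - (n:ℂ)‖ := by
        have h3 : |(n:ℝ)| - R ≤ ‖z - (n:ℂ)‖ := hw
        have h4 : ‖z - (n:ℂ)‖ ≤ π * ‖z - (n:ℂ)‖ :=
          le_mul_of_one_le_left hwpos.le (by linarith [Real.pi_gt_three])
        linarith
      have hd0 : (0:ℝ) < |(n:ℝ)| - R - 1 := by linarith
      apply div_le_div₀ (Real.exp_pos _).le hsin hd0 hd1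
    have hmax : max 1 (|(n:ℝ)| - R - 1) = |(n:ℝ)| - R - 1 := max_eq_right (by linarith)
    rw [hu]
    simp only [hmax]
    calc ‖csinc (z - n)‖^2 ≤ (Real.exp (π * R) / (|(n:ℝ)| - R - 1))^2 :=
          pow_le_pow_left₀ (norm_nonneg _) hcs 2
      _ = Real.exp (π * R)^2 / (|(n:ℝ)| - R - 1)^2 := by rw [div_pow]
      _ ≤ D / (|(n:ℝ)| - R - 1)^2 := by
          gcongr
          exact le_max_right _ _
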